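/- If a closed subset A of a space X is a ℤ/p-homological Z_n-set in X, then A is a Prüfer-p-group-homological Z_n-set in X; conversely, if A is a Prüfer-p-group-homological Z_{n+1}-set, then A is a ℤ/p-homological Z_n-set. -/

import Mathlib

open SimplexCategory

noncomputable section

/-- The topological `n`-simplex. -/
abbrev TopSimplex (n : ℕ) : Type := stdSimplex ℝ (Fin (n + 1))

/-- The `i`-th face inclusion of topological simplices, as a continuous map. -/
def faceMap {n : ℕ} (i : Fin (n + 2)) : C(TopSimplex n, TopSimplex (n + 1)) :=
  ⟨stdSimplex.map (SimplexCategory.δ i).toOrderHom, stdSimplex.continuous_map _⟩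

/-- The group of singular `n`-chains of `X` with coefficients in `G`. -/
abbrev SChain (G : Type) [AddCommGroup G] (X : Type) [TopologicalSpace X] (n : ℕ) : Type :=
  C(TopSimplex n, X) →₀ G

/-- The singular boundary operator. -/
def sBoundary {G : Type} [AddCommGroup G] {X : Type} [TopologicalSpace X] {n : ℕ}
    (c : SChain G X (n + 1)) : SChain G X n :=
  c.sum fun σ g => ∑ i : Fin (n + 2), ((-1 : ℤ) ^ (i : ℕ)) • Finsupp.single (σ.comp (faceMap i)) g

/-- The chain map induced by a continuous map. -/
def chainMap {G : Type} [AddCommGroup G] {X Y : Type} [TopologicalSpace X] [TopologicalSpace Y]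
    (φ : C(X, Y)) {n : ℕ} (c : SChain G X n) : SChain G Y n :=
  Finsupp.mapDomain (fun σ => φ.comp σ) c

/-- The continuous inclusion of one subspace into a larger one. -/
def inclCM {X : Type} [TopologicalSpace X] {B U : Set X} (h : B ⊆ U) : C(B, U) :=
  ⟨Set.inclusion h, continuous_inclusion h⟩

/-- `ZeroRelHomology G U B h k` says that the relative singular homology group
`H_k(U, B; G)` of the pair of subspaces `B ⊆ U` is trivial: every relative
`k`-cycle is a relative `k`-boundary. -/
def ZeroRelHomology (G : Type) [AddCommGroup G] {X : Type} [TopologicalSpace X]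
    (U B : Set X) (h : B ⊆ U) : ℕ → Prop
  | 0 => ∀ c : SChain G U 0, ∃ (c' : SChain G U 1) (d : SChain G B 0),
      c = sBoundary c' + chainMap (inclCM h) d
  | (k + 1) => ∀ c : SChain G U (k + 1),
      (∃ e : SChain G B k, sBoundary c = chainMap (inclCM h) e) →
      ∃ (c' : SChain G U (k + 2)) (d : SChain G B (k + 1)),
        c = sBoundary c' + chainMap (inclCM h) d

/-- `A` is a `G`-homological `Z_n`-set in `X`. -/
def IsGHomologicalZSet (G : Type) [AddCommGroup G] {X : Type} [TopologicalSpace X]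
    (A : Set X) (n : ℕ) : Prop :=
  IsClosed A ∧ ∀ U : Set X, IsOpen U → ∀ k ≤ n,
    ZeroRelHomology G U (U \ A) Set.diff_subset k

/-- The `p`-torsion part of an abelian group. -/
def pTorsion (p : ℕ) (G : Type) [AddCommGroup G] : AddSubgroup G where
  carrier := {x : G | ∃ k : ℕ, (p ^ k : ℕ) • x = 0}
  zero_mem' := ⟨0, by simp⟩
  add_mem' := by
    rintro a b ⟨k, hk⟩ ⟨l, hl⟩
    refine ⟨k + l, ?_⟩
    have h1 : (p ^ (k + l) : ℕ) • a = 0 := by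
      rw [pow_add, mul_comm, mul_smul, hk, smul_zero]
    have h2 : (p ^ (k + l) : ℕ) • b = 0 := by
      rw [pow_add, mul_smul, hl, smul_zero]
    rw [smul_add, h1, h2, add_zero]
  neg_mem' := by
    rintro a ⟨k, hk⟩
    exact ⟨k, by rw [smul_neg, hk, neg_zero]⟩

/-- The Prüfer (quasicyclic) `p`-group `ℚ_p`, realized as the `p`-torsion part of `ℚ/ℤ`;
it is the direct limit of the groups `ℤ/p^k`. -/
abbrev PruferGroup (p : ℕ) : Type :=
  ↥(pTorsion p (ℚ ⧸ AddSubgroup.zmultiples (1 : ℚ)))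

open CategoryTheory

variable {G H K : Type} [AddCommGroup G] [AddCommGroup H] [AddCommGroup K]
  {X Y Z : Type} [TopologicalSpace X] [TopologicalSpace Y] [TopologicalSpace Z]

theorem sBoundary_zero {n : ℕ} : sBoundary (0 : SChain G X (n+1)) = 0 := by
  simp [sBoundary]

theorem sBoundary_single {n : ℕ} (σ : C(TopSimplex (n+1), X)) (g : G) :
    sBoundary (Finsupp.single σ g) =
      ∑ i : Fin (n + 2), ((-1 : ℤ) ^ (i : ℕ)) • Finsupp.single (σ.comp (faceMap i)) g := by
  rw [sBoundary, Finsupp.sum_single_index]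
  simp

theorem sBoundary_add {n : ℕ} (a b : SChain G X (n+1)) :
    sBoundary (a + b) = sBoundary a + sBoundary b := by
  classical
  rw [sBoundary, Finsupp.sum_add_index]
  · rfl
  · intro σ _; simp
  · intro σ _ g1 g2; simp [Finsupp.single_add, smul_add, Finset.sum_add_distrib]

/-- `sBoundary` as an `AddMonoidHom`. -/
def sBoundaryHom (G : Type) [AddCommGroup G] (X : Type) [TopologicalSpace X] (n : ℕ) :
    SChain G X (n+1) →+ SChain G X n where
  toFun := sBoundary
  map_zero' := sBoundary_zero
  map_add' := sBoundary_add

/-- `chainMap` as an `AddMonoidHom`. -/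
def chainMapHom (φ : C(X, Y)) (G : Type) [AddCommGroup G] (n : ℕ) :
    SChain G X n →+ SChain G Y n :=
  Finsupp.mapDomain.addMonoidHom (fun σ => φ.comp σ)

theorem chainMapHom_apply (φ : C(X, Y)) {n : ℕ} (c : SChain G X n) :
    chainMapHom φ G n c = chainMap φ c := rfl

theorem sBoundaryHom_apply {n : ℕ} (c : SChain G X (n+1)) :
    sBoundaryHom G X n c = sBoundary c := rfl

theorem chainMap_single (φ : C(X, Y)) {n : ℕ} (σ : C(TopSimplex n, X)) (g : G) :
    chainMap φ (Finsupp.single σ g) = Finsupp.single (φ.comp σ) g :=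
  Finsupp.mapDomain_single

theorem sBoundary_chainMap (φ : C(X, Y)) {n : ℕ} (c : SChain G X (n+1)) :
    sBoundary (chainMap φ c) = chainMap φ (sBoundary c) := by
  induction c using Finsupp.induction with
  | zero => simp [chainMap, sBoundary_zero]
  | single_add σ g c _ _ ih =>
    have h1 : chainMap φ (Finsupp.single σ g + c)
        = chainMap φ (Finsupp.single σ g) + chainMap φ c :=
      map_add (chainMapHom φ G (n+1)) _ _
    have h2 : chainMap φ ((∑ i : Fin (n + 2),
          ((-1:ℤ) ^ (i:ℕ)) • Finsupp.single (σ.comp (faceMap i)) g) + sBoundary c)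
        = chainMap φ (∑ i : Fin (n + 2),
            ((-1:ℤ) ^ (i:ℕ)) • Finsupp.single (σ.comp (faceMap i)) g)
          + chainMap φ (sBoundary c) := map_add (chainMapHom φ G n) _ _
    have h3 : chainMap φ (∑ i : Fin (n + 2),
          ((-1:ℤ) ^ (i:ℕ)) • Finsupp.single (σ.comp (faceMap i)) g)
        = ∑ i : Fin (n + 2),
            ((-1:ℤ) ^ (i:ℕ)) • Finsupp.single ((φ.comp σ).comp (faceMap i)) g := by
      rw [show chainMap φ (∑ i : Fin (n + 2),
            ((-1:ℤ) ^ (i:ℕ)) • Finsupp.single (σ.comp (faceMap i)) g)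
          = ∑ i : Fin (n + 2), chainMapHom φ G n
              (((-1:ℤ) ^ (i:ℕ)) • Finsupp.single (σ.comp (faceMap i)) g)
          from map_sum (chainMapHom φ G n) _ _]
      refine Finset.sum_congr rfl fun i _ => ?_
      rw [map_zsmul, chainMapHom_apply, chainMap_single, ContinuousMap.comp_assoc]
    rw [h1, sBoundary_add, sBoundary_add, ih, chainMap_single, sBoundary_single,
      sBoundary_single, h2, h3]

/-- Change of coefficients on chains. -/
def cRange (f : G →+ H) (X : Type) [TopologicalSpace X] (n : ℕ) :
    SChain G X n →+ SChain H X n :=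
  Finsupp.mapRange.addMonoidHom f

theorem cRange_apply (f : G →+ H) {n : ℕ} (c : SChain G X n) (σ : C(TopSimplex n, X)) :
    cRange f X n c σ = f (c σ) := rfl

theorem cRange_single (f : G →+ H) {n : ℕ} (σ : C(TopSimplex n, X)) (g : G) :
    cRange f X n (Finsupp.single σ g) = Finsupp.single σ (f g) :=
  Finsupp.mapRange_single (hf := map_zero f)

theorem cRange_chainMap (f : G →+ H) (φ : C(X, Y)) {n : ℕ} (c : SChain G X n) :
    cRange f Y n (chainMap φ c) = chainMap φ (cRange f X n c) :=
  (Finsupp.mapDomain_mapRange _ c _ (map_zero f) (map_add f)).symm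

theorem cRange_sBoundary (f : G →+ H) {n : ℕ} (c : SChain G X (n+1)) :
    cRange f X n (sBoundary c) = sBoundary (cRange f X (n+1) c) := by
  induction c using Finsupp.induction with
  | zero => simp [sBoundary_zero]
  | single_add σ g c _ _ ih =>
    rw [sBoundary_add, map_add, map_add, sBoundary_add, ih, sBoundary_single, cRange_single,
      sBoundary_single, map_sum]
    congr 1
    exact Finset.sum_congr rfl fun i _ => by rw [map_zsmul, cRange_single]

theorem cRange_injective {f : G →+ H} (hf : Function.Injective f) {n : ℕ} :
    Function.Injective (cRange f X n) :=
  Finsupp.mapRange_injective _ (map_zero f) hf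

theorem cRange_surjective {f : G →+ H} (hf : Function.Surjective f) {n : ℕ} :
    Function.Surjective (cRange f X n) :=
  Finsupp.mapRange_surjective _ (map_zero f) hf

theorem chainMap_injective {φ : C(X, Y)} (hφ : Function.Injective φ) {n : ℕ} :
    Function.Injective (chainMap (G := G) φ (n := n)) :=
  Finsupp.mapDomain_injective fun σ τ h => ContinuousMap.ext fun x =>
    hφ (by exact congrFun (congrArg (fun (ψ : C(TopSimplex n, Y)) => (ψ : TopSimplex n → Y)) h) x)

/-- Exactness at the chain level. -/
theorem cRange_exact {f : G →+ H} (hf : Function.Injective f) {π : H →+ K}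
    (hex : ∀ b : H, π b = 0 ↔ ∃ a, f a = b) {n : ℕ} (c : SChain H X n)
    (hc : cRange π X n c = 0) : ∃ a : SChain G X n, cRange f X n a = c := by
  classical
  have hmem : ∀ σ, ∃ a, f a = c σ := fun σ => by
    have : π (c σ) = 0 := by
      have := congrFun (congrArg (fun (d : SChain K X n) => (d : C(TopSimplex n, X) → K)) hc) σ
      simpa [cRange_apply] using this
    exact (hex (c σ)).mp this
  refine ⟨Finsupp.onFinset c.support (fun σ => Classical.choose (hmem σ)) (fun σ hσ => ?_), ?_⟩
  · rw [Finsupp.mem_support_iff]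
    intro h0
    apply hσ
    have hs := Classical.choose_spec (hmem σ)
    show Classical.choose (hmem σ) = 0
    apply hf
    rw [hs, h0, map_zero]
  · ext σ
    rw [cRange_apply, Finsupp.onFinset_apply]
    exact Classical.choose_spec (hmem σ)

/-- Precomposition with a simplex-category morphism, on chains. -/
def preHom (G : Type) [AddCommGroup G] (X : Type) [TopologicalSpace X] {m k : ℕ}
    (f : SimplexCategory.mk m ⟶ SimplexCategory.mk k) : SChain G X k →+ SChain G X m :=
  Finsupp.mapDomain.addMonoidHom
    (fun σ => σ.comp ⟨stdSimplex.map f.toOrderHom, stdSimplex.continuous_map _⟩)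

theorem preHom_single {m k : ℕ} (f : SimplexCategory.mk m ⟶ SimplexCategory.mk k)
    (σ : C(TopSimplex k, X)) (g : G) :
    preHom G X f (Finsupp.single σ g) =
      Finsupp.single (σ.comp ⟨stdSimplex.map f.toOrderHom, stdSimplex.continuous_map _⟩) g :=
  Finsupp.mapDomain_single

theorem preHom_delta {n : ℕ} (i : Fin (n + 2)) (c : SChain G X (n + 1)) :
    preHom G X (SimplexCategory.δ i) c = Finsupp.mapDomain (fun σ => σ.comp (faceMap i)) c := rfl

theorem sBoundary_eq_sum {n : ℕ} (c : SChain G X (n + 1)) :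
    sBoundary c = ∑ i : Fin (n + 2),
      ((-1 : ℤ) ^ (i : ℕ)) • preHom G X (SimplexCategory.δ i) c := by
  induction c using Finsupp.induction with
  | zero => simp [sBoundary_zero]
  | single_add σ g c _ _ ih =>
    rw [sBoundary_add, ih, sBoundary_single]
    rw [show (∑ i : Fin (n + 2), ((-1:ℤ) ^ (i:ℕ)) •
        preHom G X (SimplexCategory.δ i) (Finsupp.single σ g + c))
      = ∑ i : Fin (n + 2), (((-1:ℤ) ^ (i:ℕ)) • preHom G X (SimplexCategory.δ i)
          (Finsupp.single σ g) + ((-1:ℤ) ^ (i:ℕ)) • preHom G X (SimplexCategory.δ i) c)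
      from Finset.sum_congr rfl fun i _ => by rw [map_add, smul_add]]
    rw [Finset.sum_add_distrib]
    congr 1
    exact Finset.sum_congr rfl fun i _ => by rw [preHom_single]; rfl

theorem preHom_comp {m k l : ℕ} (f : SimplexCategory.mk m ⟶ SimplexCategory.mk k)
    (f' : SimplexCategory.mk k ⟶ SimplexCategory.mk l) (c : SChain G X l) :
    preHom G X f (preHom G X f' c) = preHom G X (f ≫ f') c := by
  induction c using Finsupp.induction with
  | zero => simp
  | single_add σ g c _ _ ih =>
    rw [map_add, map_add, map_add, ih, preHom_single, preHom_single, preHom_single,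
      ContinuousMap.comp_assoc]
    congr 2
    ext x
    show σ (stdSimplex.map f'.toOrderHom (stdSimplex.map f.toOrderHom x)) =
      σ (stdSimplex.map (f ≫ f').toOrderHom x)
    congr 1
    rw [stdSimplex.map_comp_apply]
    rfl

theorem neg_one_pow_smul_cancel {M : Type} [AddCommGroup M] {a b : ℕ}
    (hab : (-1:ℤ) ^ b = -((-1:ℤ) ^ a)) (v : M) :
    ((-1:ℤ) ^ a) • v + ((-1:ℤ) ^ b) • v = 0 := by
  rw [hab, neg_smul, add_neg_cancel]

set_option maxHeartbeats 1000000 in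
theorem sBoundary_sBoundary {n : ℕ} (c : SChain G X (n + 2)) :
    sBoundary (sBoundary c) = 0 := by
  classical
  have key : sBoundary (sBoundary c) = ∑ p ∈ (Finset.univ ×ˢ Finset.univ :
      Finset (Fin (n + 3) × Fin (n + 2))), ((-1 : ℤ) ^ ((p.1 : ℕ) + (p.2 : ℕ))) •
        preHom G X (SimplexCategory.δ p.2 ≫ SimplexCategory.δ p.1) c := by
    rw [← sBoundaryHom_apply (c := sBoundary c), sBoundary_eq_sum, map_sum]
    rw [show (∑ I : Fin (n + 3), sBoundaryHom G X n
          (((-1:ℤ) ^ (I:ℕ)) • preHom G X (SimplexCategory.δ I) c))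
        = ∑ I : Fin (n + 3), ∑ J : Fin (n + 2), ((-1:ℤ) ^ ((I:ℕ) + (J:ℕ))) •
            preHom G X (SimplexCategory.δ J ≫ SimplexCategory.δ I) c from
      Finset.sum_congr rfl fun I _ => by
        rw [map_zsmul, sBoundaryHom_apply, sBoundary_eq_sum, Finset.smul_sum]
        exact Finset.sum_congr rfl fun J _ => by
          rw [preHom_comp, smul_smul, ← pow_add]]
    exact (Finset.sum_product' _ _ _).symm
  rw [key]
  refine Finset.sum_involution
    (fun p _ => if h : (p.1 : ℕ) ≤ (p.2 : ℕ) then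
        (p.2.succ, p.1.castLT (lt_of_le_of_lt h p.2.isLt))
      else (p.2.castSucc, p.1.pred (fun h0 => h (by simp [h0]))))
    ?_ ?_ (fun a ha => Finset.mem_univ _) ?_
  · rintro ⟨I, J⟩ -
    dsimp only
    by_cases h : (I : ℕ) ≤ (J : ℕ)
    · rw [dif_pos h,
        SimplexCategory.δ_comp_δ'' (show I ≤ Fin.castSucc J from (by exact_mod_cast h))]
      exact neg_one_pow_smul_cancel (by
        simp only [Fin.val_succ, Fin.coe_castLT]
        rw [show (J:ℕ) + 1 + (I:ℕ) = ((I:ℕ) + (J:ℕ)) + 1 by omega, pow_succ]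
        ring) _
    · rw [dif_neg h]
      push_neg at h
      have hlt : Fin.castSucc J < I := by
        rw [Fin.lt_iff_val_lt_val]; simpa using h
      rw [show SimplexCategory.δ J ≫ SimplexCategory.δ I = _ from
        SimplexCategory.δ_comp_δ' hlt]
      exact neg_one_pow_smul_cancel (by
        simp only [Fin.coe_castSucc, Fin.coe_pred]
        rw [show (I:ℕ) + (J:ℕ) = ((J:ℕ) + ((I:ℕ) - 1)) + 1 by omega, pow_succ]
        ring) _
  · rintro ⟨I, J⟩ - _
    dsimp only
    by_cases h : (I : ℕ) ≤ (J : ℕ)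
    · rw [dif_pos h]
      intro hc
      have h2 := congrArg (fun q : Fin (n+3) × Fin (n+2) => (q.1 : ℕ)) hc
      simp only [Fin.val_succ] at h2
      omega
    · rw [dif_neg h]
      intro hc
      have h2 := congrArg (fun q : Fin (n+3) × Fin (n+2) => (q.1 : ℕ)) hc
      push_neg at h
      simp only [Fin.coe_castSucc] at h2
      omega
  · rintro ⟨I, J⟩ -
    dsimp only
    by_cases h : (I : ℕ) ≤ (J : ℕ)
    · rw [dif_pos h, dif_neg (by simp only [Fin.val_succ, Fin.coe_castLT]; omega)]
      simp [Prod.ext_iff, Fin.ext_iff]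
    · have hI : (0:ℕ) ≤ (I:ℕ) := by omega
      rw [dif_neg h, dif_pos (by simp only [Fin.coe_castSucc, Fin.coe_pred]; omega)]
      simp [Prod.ext_iff, Fin.ext_iff]

theorem sBoundary_sub {n : ℕ} (a b : SChain G X (n+1)) :
    sBoundary (a - b) = sBoundary a - sBoundary b := map_sub (sBoundaryHom G X n) a b

theorem chainMap_sub (φ : C(X, Y)) {n : ℕ} (a b : SChain G X n) :
    chainMap φ (a - b) = chainMap φ a - chainMap φ b := map_sub (chainMapHom φ G n) a b

theorem chainMap_add (φ : C(X, Y)) {n : ℕ} (a b : SChain G X n) :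
    chainMap φ (a + b) = chainMap φ a + chainMap φ b := map_add (chainMapHom φ G n) a b

theorem cRange_comp' (f : G →+ H) (π : H →+ K) {n : ℕ} (c : SChain G X n) :
    cRange π X n (cRange f X n c) = cRange (π.comp f) X n c := by
  ext σ; simp [cRange_apply]

theorem cRange_zero_hom {n : ℕ} (c : SChain G X n) : cRange (0 : G →+ H) X n c = 0 := by
  ext σ; simp [cRange_apply]

theorem chainMap_incl_injective {B U : Set X} (h : B ⊆ U) {n : ℕ} :
    Function.Injective (chainMap (G := G) (inclCM h) (n := n)) :=
  chainMap_injective (Set.inclusion_injective h)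

section Chase

variable {U B : Set X} {f : G →+ H} {π : H →+ K}

/-- The common core of the second chase. -/
theorem chase_core (h : B ⊆ U) (hf : Function.Injective f) (hπ : Function.Surjective π)
    (hex : ∀ b : H, π b = 0 ↔ ∃ a, f a = b) {L : ℕ} (c : SChain G U L)
    (c' : SChain H U (L+1)) (d : SChain H B L)
    (hcd : cRange f U L c = sBoundary c' + chainMap (inclCM h) d)
    (hC : ZeroRelHomology K U B h (L+1)) :
    ∃ (a : SChain G U (L+1)) (w : SChain G B L),
      c = sBoundary a + chainMap (inclCM h) w := by
  have hπf : (π.comp f) = (0 : G →+ K) := by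
    ext a; exact (hex (f a)).mpr ⟨a, rfl⟩
  -- π_* c' is a relative cycle
  have hcyc : sBoundary (cRange π U (L+1) c') = chainMap (inclCM h) (-(cRange π B L d)) := by
    rw [← cRange_sBoundary]
    have : sBoundary c' = cRange f U L c - chainMap (inclCM h) d := by
      rw [hcd]; abel
    rw [this, map_sub, cRange_comp', hπf, cRange_zero_hom, cRange_chainMap, zero_sub]
    exact (map_neg (chainMapHom (inclCM h) K L) _).symm
  obtain ⟨c'', d'', h2⟩ := hC (cRange π U (L+1) c') ⟨-(cRange π B L d), hcyc⟩
  obtain ⟨b, hb⟩ := cRange_surjective (X := U) hπ (n := L+2) c''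
  obtain ⟨bd, hbd⟩ := cRange_surjective (X := B) hπ (n := L+1) d''
  have hr : cRange π U (L+1) (c' - sBoundary b - chainMap (inclCM h) bd) = 0 := by
    rw [map_sub, map_sub, cRange_sBoundary, hb, cRange_chainMap, hbd, h2]
    abel
  obtain ⟨a, ha⟩ := cRange_exact hf hex _ hr
  -- compute the boundary relation
  have hkey : cRange f U L (c - sBoundary a) = chainMap (inclCM h) (d + sBoundary bd) := by
    have h3 : sBoundary (cRange f U (L+1) a) =
        sBoundary c' - chainMap (inclCM h) (sBoundary bd) := by
      rw [ha, sBoundary_sub, sBoundary_sub, sBoundary_sBoundary, sBoundary_chainMap, sub_zero]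
    rw [map_sub, cRange_sBoundary, h3, hcd, chainMap_add]
    abel
  have hπw : cRange π B L (d + sBoundary bd) = 0 := by
    apply chainMap_incl_injective (G := K) h
    rw [← cRange_chainMap, ← hkey, cRange_comp', hπf, cRange_zero_hom, chainMap]
    rw [Finsupp.mapDomain_zero]
  obtain ⟨w, hw⟩ := cRange_exact hf hex _ hπw
  refine ⟨a, w, ?_⟩
  have h4 : chainMap (inclCM h) (d + sBoundary bd) =
      cRange f U L c - cRange f U L (sBoundary a) := by rw [← hkey, map_sub]
  have : cRange f U L c = cRange f U L (sBoundary a + chainMap (inclCM h) w) := by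
    rw [map_add, cRange_chainMap, hw, h4]
    abel
  exact cRange_injective (X := U) hf this

end Chase

section Chase2

variable {U B : Set X} {f : G →+ H} {π : H →+ K}

theorem chaseII (h : B ⊆ U) (hf : Function.Injective f) (hπ : Function.Surjective π)
    (hex : ∀ b : H, π b = 0 ↔ ∃ a, f a = b) (k : ℕ)
    (hB : ZeroRelHomology H U B h k) (hC : ZeroRelHomology K U B h (k+1)) :
    ZeroRelHomology G U B h k := by
  match k with
  | 0 =>
    intro c
    obtain ⟨c', d, hcd⟩ := hB (cRange f U 0 c)
    obtain ⟨a, w, haw⟩ := chase_core h hf hπ hex c c' d hcd hC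
    exact ⟨a, w, haw⟩
  | (m + 1) =>
    rintro c ⟨e, he⟩
    have hcyc : sBoundary (cRange f U (m+1) c) = chainMap (inclCM h) (cRange f B m e) := by
      rw [← cRange_sBoundary, he, cRange_chainMap]
    obtain ⟨c', d, hcd⟩ := hB (cRange f U (m+1) c) ⟨cRange f B m e, hcyc⟩
    obtain ⟨a, w, haw⟩ := chase_core h hf hπ hex c c' d hcd hC
    exact ⟨a, w, haw⟩

theorem chaseI (h : B ⊆ U) (hf : Function.Injective f) (hπ : Function.Surjective π)
    (hex : ∀ b : H, π b = 0 ↔ ∃ a, f a = b) (k : ℕ)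
    (hA : ZeroRelHomology G U B h k) (hC : ZeroRelHomology K U B h k) :
    ZeroRelHomology H U B h k := by
  have main : ∀ (L : ℕ) (c : SChain H U L) (c' : SChain K U (L+1)) (d : SChain K B L),
      cRange π U L c = sBoundary c' + chainMap (inclCM h) d →
      ∃ (a : SChain G U L) (b : SChain H U (L+1)) (bd : SChain H B L),
        c = cRange f U L a + sBoundary b + chainMap (inclCM h) bd := by
    intro L c c' d hcd
    obtain ⟨b, hb⟩ := cRange_surjective (X := U) hπ (n := L+1) c'
    obtain ⟨bd, hbd⟩ := cRange_surjective (X := B) hπ (n := L) d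
    have hr : cRange π U L (c - sBoundary b - chainMap (inclCM h) bd) = 0 := by
      rw [map_sub, map_sub, cRange_sBoundary, hb, cRange_chainMap, hbd, hcd]
      abel
    obtain ⟨a, ha⟩ := cRange_exact hf hex _ hr
    exact ⟨a, b, bd, by rw [ha]; abel⟩
  match k with
  | 0 =>
    intro c
    obtain ⟨c', d, hcd⟩ := hC (cRange π U 0 c)
    obtain ⟨a, b, bd, hab⟩ := main 0 c c' d hcd
    obtain ⟨a', ad, ha'⟩ := hA a
    refine ⟨b + cRange f U 1 a', bd + cRange f B 0 ad, ?_⟩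
    rw [hab, ha', map_add, cRange_sBoundary, cRange_chainMap, sBoundary_add, chainMap_add]
    abel
  | (m + 1) =>
    rintro c ⟨e, he⟩
    have hcyc : sBoundary (cRange π U (m+1) c) = chainMap (inclCM h) (cRange π B m e) := by
      rw [← cRange_sBoundary, he, cRange_chainMap]
    obtain ⟨c', d, hcd⟩ := hC (cRange π U (m+1) c) ⟨cRange π B m e, hcyc⟩
    obtain ⟨a, b, bd, hab⟩ := main (m+1) c c' d hcd
    -- a is a relative cycle
    have hfa : cRange f U (m+1) a = c - sBoundary b - chainMap (inclCM h) bd := by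
      rw [hab]; abel
    have hbnd : cRange f U m (sBoundary a) = chainMap (inclCM h) (e - sBoundary bd) := by
      rw [cRange_sBoundary, hfa, sBoundary_sub, sBoundary_sub, sBoundary_sBoundary,
        sBoundary_chainMap, he, chainMap_sub, sub_zero]
    have hπf : (π.comp f) = (0 : G →+ K) := by
      ext x; exact (hex (f x)).mpr ⟨x, rfl⟩
    have hπw : cRange π B m (e - sBoundary bd) = 0 := by
      apply chainMap_incl_injective (G := K) h
      rw [← cRange_chainMap, ← hbnd, cRange_comp', hπf, cRange_zero_hom, chainMap,
        Finsupp.mapDomain_zero]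
    obtain ⟨w, hw⟩ := cRange_exact hf hex _ hπw
    have hcycA : sBoundary a = chainMap (inclCM h) w := by
      apply cRange_injective (X := U) hf
      rw [hbnd, cRange_chainMap, hw]
    obtain ⟨a', ad, ha'⟩ := hA a ⟨w, hcycA⟩
    refine ⟨b + cRange f U (m+2) a', bd + cRange f B (m+1) ad, ?_⟩
    rw [hab, ha', map_add, cRange_sBoundary, cRange_chainMap, sBoundary_add, chainMap_add]
    abel

end Chase2

theorem zrh_of_subsingleton [Subsingleton G] {U B : Set X} (h : B ⊆ U) (k : ℕ) :
    ZeroRelHomology G U B h k := by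
  have hz : ∀ (T : Type) [TopologicalSpace T] (L : ℕ) (c : SChain G T L), c = 0 := by
    intro T _ L c; ext σ; exact Subsingleton.elim _ _
  match k with
  | 0 =>
    intro c
    refine ⟨0, 0, ?_⟩
    rw [hz _ _ c, sBoundary_zero, chainMap, Finsupp.mapDomain_zero, add_zero]
  | (m+1) =>
    rintro c -
    refine ⟨0, 0, ?_⟩
    rw [hz _ _ c, sBoundary_zero, chainMap, Finsupp.mapDomain_zero, add_zero]

theorem chain_restrict {S : AddSubgroup H} {n : ℕ} (c : SChain H X n)
    (hc : ∀ σ, c σ ∈ S) : ∃ c₀ : SChain ↥S X n, cRange S.subtype X n c₀ = c := by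
  classical
  refine ⟨Finsupp.onFinset c.support (fun σ => ⟨c σ, hc σ⟩) (fun σ hσ => ?_), ?_⟩
  · rw [Finsupp.mem_support_iff]
    intro h0
    exact hσ (Subtype.ext h0)
  · ext σ
    rw [cRange_apply, Finsupp.onFinset_apply]
    rfl

/-- `n •` as an `AddMonoidHom`. -/
def nsmulHom (n : ℕ) (A : Type) [AddCommGroup A] : A →+ A where
  toFun := (n • ·)
  map_zero' := smul_zero n
  map_add' := fun a b => smul_add n a b

namespace Prufer

variable {p : ℕ} (hp : p.Prime)

abbrev QZ : Type := ℚ ⧸ AddSubgroup.zmultiples (1 : ℚ)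

def qmk : ℚ →+ QZ := QuotientAddGroup.mk' _

theorem qmk_surjective : Function.Surjective (qmk) := QuotientAddGroup.mk'_surjective _

theorem qmk_eq_zero_iff (r : ℚ) : qmk r = 0 ↔ ∃ m : ℤ, (m : ℚ) = r := by
  rw [qmk, QuotientAddGroup.mk'_apply, QuotientAddGroup.eq_zero_iff,
    AddSubgroup.mem_zmultiples_iff]
  simp

/-- The generator `1/p` of the `p`-torsion of `ℚ/ℤ`. -/
def gen (p : ℕ) (hp : p.Prime) : PruferGroup p :=
  ⟨qmk ((p : ℚ)⁻¹), 1, by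
    have hp0 : (p : ℚ) ≠ 0 := Nat.cast_ne_zero.mpr hp.ne_zero
    rw [← map_nsmul qmk]
    rw [show ((p ^ 1 : ℕ) : ℕ) • ((p:ℚ)⁻¹) = 1 by
      rw [nsmul_eq_mul, pow_one]
      field_simp]
    exact (qmk_eq_zero_iff _).mpr ⟨1, by norm_num⟩⟩

theorem p_smul_gen : (p : ℤ) • gen p hp = 0 := by
  apply Subtype.ext
  show (p : ℤ) • (gen p hp).1 = 0
  rw [show (gen p hp).1 = qmk ((p:ℚ)⁻¹) from rfl, ← map_zsmul qmk]
  have hp0 : (p : ℚ) ≠ 0 := Nat.cast_ne_zero.mpr hp.ne_zero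
  rw [show ((p : ℤ)) • ((p:ℚ)⁻¹) = (1 : ℚ) by
    rw [zsmul_eq_mul]
    push_cast
    field_simp]
  exact (qmk_eq_zero_iff _).mpr ⟨1, by norm_num⟩

/-- The embedding of `ZMod p` into the Prüfer group. -/
def iHom (p : ℕ) (hp : p.Prime) : ZMod p →+ PruferGroup p :=
  ZMod.lift p ⟨zmultiplesHom _ (gen p hp), by
    rw [zmultiplesHom_apply]; exact p_smul_gen hp⟩

theorem iHom_intCast (m : ℤ) : iHom p hp ((m : ℤ) : ZMod p) = m • gen p hp :=
  ZMod.lift_coe _ _ _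

theorem iHom_injective : Function.Injective (iHom p hp) := by
  rw [iHom, ZMod.lift_injective]
  intro m hm
  have hm' : m • (gen p hp).1 = 0 := congrArg Subtype.val hm
  rw [show (gen p hp).1 = qmk ((p:ℚ)⁻¹) from rfl, ← map_zsmul qmk] at hm'
  obtain ⟨l, hl⟩ := (qmk_eq_zero_iff _).mp hm'
  have hp0 : (p : ℚ) ≠ 0 := Nat.cast_ne_zero.mpr hp.ne_zero
  rw [zsmul_eq_mul] at hl
  have hml : (m : ℚ) = l * p := by
    field_simp at hl
    linarith
  have hmz : m = l * p := by exact_mod_cast hml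
  rw [hmz]
  push_cast
  simp [ZMod.natCast_self]

end Prufer

namespace Prufer

variable {p : ℕ}

theorem smul_mk_eq (n : ℕ) (r : ℚ) : (n : ℕ) • qmk r = qmk ((n : ℚ) * r) := by
  rw [← map_nsmul qmk, nsmul_eq_mul]

/-- Multiplication by `p` is surjective on the Prüfer group. -/
theorem p_surjective (hp : p.Prime) : Function.Surjective (nsmulHom p (PruferGroup p)) := by
  intro x
  have hp0 : (p : ℚ) ≠ 0 := Nat.cast_ne_zero.mpr hp.ne_zero
  obtain ⟨r, hr⟩ := qmk_surjective (x : QZ)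
  obtain ⟨k, hk⟩ := x.2
  refine ⟨⟨qmk (r / p), k + 1, ?_⟩, ?_⟩
  · rw [smul_mk_eq]
    rw [show ((p ^ (k+1) : ℕ) : ℚ) * (r / p) = ((p ^ k : ℕ) : ℚ) * r by
      push_cast; field_simp; ring]
    rw [← smul_mk_eq, hr]
    exact hk
  · apply Subtype.ext
    show (p : ℕ) • qmk (r / p) = (x : QZ)
    rw [smul_mk_eq, show ((p:ℚ)) * (r / p) = r by field_simp, hr]

/-- Exactness: the kernel of multiplication by `p` is the image of `ZMod p`. -/
theorem p_exact (hp : p.Prime) : ∀ b : PruferGroup p,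
    nsmulHom p (PruferGroup p) b = 0 ↔ ∃ a : ZMod p, iHom p hp a = b := by
  intro b
  have hp0 : (p : ℚ) ≠ 0 := Nat.cast_ne_zero.mpr hp.ne_zero
  constructor
  · intro hb
    obtain ⟨r, hr⟩ := qmk_surjective (b : QZ)
    have hb' : qmk ((p : ℚ) * r) = 0 := by
      rw [← smul_mk_eq, hr]
      exact congrArg Subtype.val hb
    obtain ⟨m, hm⟩ := (qmk_eq_zero_iff _).mp hb'
    refine ⟨((m : ℤ) : ZMod p), ?_⟩
    rw [iHom_intCast]
    apply Subtype.ext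
    show m • (gen p hp : QZ) = (b : QZ)
    rw [show (gen p hp : QZ) = qmk ((p:ℚ)⁻¹) from rfl, ← map_zsmul qmk, zsmul_eq_mul]
    rw [show (m : ℚ) * (p:ℚ)⁻¹ = r by field_simp at hm ⊢; linarith, hr]
  · rintro ⟨a, rfl⟩
    obtain ⟨m, rfl⟩ := ZMod.intCast_surjective a
    show (p : ℕ) • iHom p hp ((m : ℤ) : ZMod p) = 0
    rw [iHom_intCast, smul_comm]
    rw [show (p : ℕ) • gen p hp = (p : ℤ) • gen p hp from by
      rw [natCast_zsmul]]
    rw [p_smul_gen hp, smul_zero]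

/-- The subgroup of elements killed by `p^m`. -/
def Cm (p : ℕ) (m : ℕ) : AddSubgroup (PruferGroup p) :=
  (nsmulHom (p ^ m) (PruferGroup p)).ker

theorem mem_Cm {m : ℕ} {x : PruferGroup p} : x ∈ Cm p m ↔ (p ^ m : ℕ) • x = 0 :=
  Iff.rfl

instance Cm_zero_subsingleton : Subsingleton ↥(Cm p 0) := by
  constructor
  rintro ⟨a, ha⟩ ⟨b, hb⟩
  rw [mem_Cm, pow_zero, one_nsmul] at ha hb
  exact Subtype.ext (ha.trans hb.symm)

theorem Cm_mono {k m : ℕ} (hkm : k ≤ m) : Cm p k ≤ Cm p m := by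
  intro x hx
  rw [mem_Cm] at hx ⊢
  obtain ⟨t, rfl⟩ := Nat.exists_eq_add_of_le hkm
  rw [pow_add, mul_nsmul, hx, smul_zero]

theorem exists_mem_Cm (x : PruferGroup p) : ∃ m : ℕ, x ∈ Cm p m := by
  obtain ⟨k, hk⟩ := x.2
  exact ⟨k, by rw [mem_Cm]; exact Subtype.ext hk⟩

theorem p_smul_iHom (hp : p.Prime) (a : ZMod p) : (p : ℕ) • iHom p hp a = 0 := by
  rw [← map_nsmul (iHom p hp)]
  rw [show (p : ℕ) • a = 0 from by
    rw [nsmul_eq_mul, ZMod.natCast_self, zero_mul]]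
  exact map_zero _

/-- The embedding of `ZMod p` into `Cm p (m+1)`. -/
def iStep (hp : p.Prime) (m : ℕ) : ZMod p →+ ↥(Cm p (m + 1)) :=
  (iHom p hp).codRestrict _ (fun a => by
    rw [mem_Cm, pow_succ, mul_nsmul, smul_comm, p_smul_iHom hp, smul_zero])

theorem iStep_injective (hp : p.Prime) (m : ℕ) : Function.Injective (iStep hp m) :=
  fun a b hab => iHom_injective hp (congrArg Subtype.val hab)

/-- Multiplication by `p` from `Cm p (m+1)` onto `Cm p m`. -/
def piStep (hp : p.Prime) (m : ℕ) : ↥(Cm p (m + 1)) →+ ↥(Cm p m) where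
  toFun x := ⟨(p : ℕ) • (x : PruferGroup p), by
    rw [mem_Cm, ← mul_nsmul, ← pow_succ']
    exact x.2⟩
  map_zero' := Subtype.ext (by simp)
  map_add' := fun a b => Subtype.ext (by
    show (p:ℕ) • ((a:PruferGroup p) + b) = (p:ℕ) • (a:PruferGroup p) + (p:ℕ) • b
    rw [smul_add])

theorem piStep_surjective (hp : p.Prime) (m : ℕ) : Function.Surjective (piStep hp m) := by
  rintro ⟨x, hx⟩
  obtain ⟨y, hy⟩ := p_surjective hp x
  refine ⟨⟨y, ?_⟩, Subtype.ext ?_⟩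
  · rw [mem_Cm, pow_succ', mul_nsmul]
    rw [show (p : ℕ) • y = x from hy]
    exact hx
  · exact hy

theorem piStep_exact (hp : p.Prime) (m : ℕ) : ∀ b : ↥(Cm p (m + 1)),
    piStep hp m b = 0 ↔ ∃ a : ZMod p, iStep hp m a = b := by
  rintro ⟨b, hb⟩
  constructor
  · intro h0
    have hpb : (p : ℕ) • b = 0 := congrArg Subtype.val h0
    obtain ⟨a, ha⟩ := (p_exact hp b).mp hpb
    exact ⟨a, Subtype.ext ha⟩
  · rintro ⟨a, ha⟩
    rw [← ha]
    apply Subtype.ext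
    show (p : ℕ) • iHom p hp a = 0
    exact p_smul_iHom hp a

end Prufer

open Prufer in
theorem coeff_mem_Cm {p : ℕ} {T : Type} [TopologicalSpace T] {L : ℕ}
    (c : SChain (PruferGroup p) T L) {m : ℕ}
    (hm : (c.support.sup fun σ => Classical.choose (exists_mem_Cm (c σ))) ≤ m) :
    ∀ σ, c σ ∈ Cm p m := by
  intro σ
  by_cases hσ : σ ∈ c.support
  · exact Cm_mono (le_trans (Finset.le_sup hσ) hm)
      (Classical.choose_spec (exists_mem_Cm (c σ)))
  · rw [Finsupp.notMem_support_iff.mp hσ]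
    exact zero_mem _

open Prufer in
set_option synthInstance.maxHeartbeats 1000000 in
theorem zrh_prufer_of_Cm {p : ℕ} {U B : Set X} (h : B ⊆ U) (k : ℕ)
    (hall : ∀ m : ℕ, ZeroRelHomology ↥(Cm p m) U B h k) :
    ZeroRelHomology (PruferGroup p) U B h k := by
  match k with
  | 0 =>
    intro c
    set m := c.support.sup fun σ => Classical.choose (exists_mem_Cm (c σ)) with hmdef
    obtain ⟨c₀, hc₀⟩ := chain_restrict (S := Cm p m) c (coeff_mem_Cm c le_rfl)
    obtain ⟨c', d, hcd⟩ := hall m c₀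
    refine ⟨cRange (Cm p m).subtype U 1 c', cRange (Cm p m).subtype B 0 d, ?_⟩
    rw [← hc₀, hcd, map_add, cRange_sBoundary, cRange_chainMap]
  | (L + 1) =>
    rintro c ⟨e, he⟩
    set m := ((c.support.sup fun σ => Classical.choose (exists_mem_Cm (c σ))) ⊔
      (e.support.sup fun σ => Classical.choose (exists_mem_Cm (e σ)))) with hmdef
    obtain ⟨c₀, hc₀⟩ := chain_restrict (S := Cm p m) c (coeff_mem_Cm c le_sup_left)
    obtain ⟨e₀, he₀⟩ := chain_restrict (S := Cm p m) e (coeff_mem_Cm e le_sup_right)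
    have hcyc : sBoundary c₀ = chainMap (inclCM h) e₀ := by
      apply cRange_injective (X := U) (f := (Cm p m).subtype) Subtype.coe_injective
      rw [cRange_sBoundary, hc₀, he, cRange_chainMap, he₀]
    obtain ⟨c', d, hcd⟩ := hall m c₀ ⟨e₀, hcyc⟩
    refine ⟨cRange (Cm p m).subtype U (L+2) c', cRange (Cm p m).subtype B (L+1) d, ?_⟩
    rw [← hc₀, hcd, map_add, cRange_sBoundary, cRange_chainMap]


open Prufer in
/-- If `A` is a `ℤ/p`-homological `Z_n`-set in `X`, then it is a Prüfer-`p`-group-homological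
`Z_n`-set; conversely, if `A` is a Prüfer-`p`-group-homological `Z_{n+1}`-set, then it is a
`ℤ/p`-homological `Z_n`-set. -/
theorem homologicalZSet_zmod_prufer {p : ℕ} (hp : p.Prime) {X : Type} [TopologicalSpace X]
    (A : Set X) (n : ℕ) :
    (IsGHomologicalZSet (ZMod p) A n → IsGHomologicalZSet (PruferGroup p) A n) ∧
    (IsGHomologicalZSet (PruferGroup p) A (n + 1) → IsGHomologicalZSet (ZMod p) A n) := by
  constructor
  · rintro ⟨hcl, hz⟩
    refine ⟨hcl, fun U hU k hk => ?_⟩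
    have hall : ∀ m : ℕ, ZeroRelHomology ↥(Cm p m) U (U \ A) Set.diff_subset k := by
      intro m
      induction m with
      | zero => exact zrh_of_subsingleton _ k
      | succ m ih =>
        exact chaseI Set.diff_subset (iStep_injective hp m) (piStep_surjective hp m)
          (piStep_exact hp m) k (hz U hU k hk) ih
    exact zrh_prufer_of_Cm _ k hall
  · rintro ⟨hcl, hz⟩
    refine ⟨hcl, fun U hU k hk => ?_⟩
    exact chaseII Set.diff_subset (iHom_injective hp) (p_surjective hp) (p_exact hp) k
      (hz U hU k (le_trans hk (Nat.le_succ n))) (hz U hU (k+1) (by omega))
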